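/- Let F : [0, ∞) → [0, 1] be a nondecreasing cumulative distribution function that has a density f continuous and nonvanishing in a neighborhood of 0 (so f(0) > 0), and such that 1 − F ∈ L^p([0, ∞)) for some p > 0. Then as n → ∞, ∫₀^∞ (1 − F(y))ⁿ dy ∼ 1/(f(0) · (n+1)); that is, f(0) · (n+1) · ∫₀^∞ (1 − F(y))ⁿ dy → 1. -/

import Mathlib

open MeasureTheory Filter

set_option maxHeartbeats 1000000

lemma aux_integral_pow_linear (c d : ℝ) (hc : c ≠ 0) (n : ℕ) :
    ∫ y in (0:ℝ)..d, (1 - c*y)^n = (1 - (1 - c*d)^(n+1)) / (c*(n+1)) := by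
  have h : (∫ y in (0:ℝ)..d, (fun x : ℝ => x ^ n) ((-c) * y + 1))
      = (-c)⁻¹ • ∫ x in ((-c)*0+1)..((-c)*d+1), x ^ n :=
    intervalIntegral.integral_comp_mul_add (fun x : ℝ => x ^ n) (neg_ne_zero.mpr hc) 1
  have h2 : (∫ y in (0:ℝ)..d, (1 - c*y)^n)
      = (∫ y in (0:ℝ)..d, (fun x : ℝ => x ^ n) ((-c) * y + 1)) := by
    congr 1; funext y; ring_nf
  rw [h2, h, integral_pow]
  have hn : ((n:ℝ)+1) ≠ 0 := by positivity
  simp only [smul_eq_mul]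
  field_simp
  ring


/-- **Asymptotics of `∫₀^∞ (1 - F y)ⁿ dy` for a general CDF.**
Let `F : [0,∞) → [0,1]` be nondecreasing, with a density `f` (`F y = ∫₀^y f`)
continuous and nonvanishing on a neighborhood `[0, ε]` of `0` (so `f 0 > 0`), and with
`1 - F ∈ L^p([0,∞))` for some `p > 0`.  Then, as `n → ∞`,
`∫₀^∞ (1 - F y)ⁿ dy ∼ 1/(f 0 · (n+1))`, i.e.
`f 0 · (n + 1) · ∫₀^∞ (1 - F y)ⁿ dy → 1`. -/
theorem integral_one_sub_cdf_pow_asymptotic (F : ℝ → ℝ)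
    (hrange : ∀ y : ℝ, 0 ≤ y → 0 ≤ F y ∧ F y ≤ 1)
    (hmono : ∀ y z : ℝ, 0 ≤ y → y ≤ z → F y ≤ F z)
    (f : ℝ → ℝ) (ε : ℝ) (hε : 0 < ε)
    (hcont : ContinuousOn f (Set.Icc 0 ε))
    (hne : ∀ y ∈ Set.Icc 0 ε, f y ≠ 0) (hf0 : 0 < f 0)
    (hdens : ∀ y ∈ Set.Icc 0 ε, F y = ∫ t in (0 : ℝ)..y, f t)
    (p : ℝ) (hp : 0 < p)
    (hLp : ∫⁻ y in Set.Ioi (0 : ℝ), ENNReal.ofReal ((1 - F y) ^ p) < ⊤) :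
    Tendsto (fun n : ℕ =>
        f 0 * (n + 1) * ∫ y in Set.Ioi (0 : ℝ), (1 - F y) ^ n) atTop (nhds 1) := by
  -- measurability
  have hFm : Measurable fun y : ℝ => F (max y 0) := by
    have hm : Monotone fun y : ℝ => F (max y 0) := fun a b hab =>
      hmono _ _ (le_max_right _ _) (max_le_max hab le_rfl)
    exact hm.measurable
  have hGm : ∀ n : ℕ, AEStronglyMeasurable (fun y => (1 - F y) ^ n)
      (volume.restrict (Set.Ioi (0:ℝ))) := by
    intro n
    have h1 : Measurable fun y : ℝ => (1 - F (max y 0)) ^ n :=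
      (measurable_const.sub hFm).pow measurable_const
    refine h1.aestronglyMeasurable.congr ?_
    filter_upwards [ae_restrict_mem measurableSet_Ioi] with y hy
    rw [max_eq_left (le_of_lt hy)]
  set k : ℕ := ⌈p⌉₊ with hk
  have hpk : p ≤ (k : ℝ) := Nat.le_ceil p
  have hk1 : 1 ≤ k := Nat.ceil_pos.mpr hp
  have hpow_le : ∀ t : ℝ, 0 ≤ t → t ≤ 1 → ∀ n : ℕ, k ≤ n → t ^ n ≤ t ^ p := by
    intro t ht ht1 n hn
    rcases eq_or_lt_of_le ht with h0 | h0
    · rw [← h0, zero_pow (by omega), Real.zero_rpow hp.ne']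
    · rw [← Real.rpow_natCast t n]
      exact Real.rpow_le_rpow_of_exponent_ge h0 ht1
        (hpk.trans (Nat.cast_le.mpr hn))
  -- integrability of (1-F)^n on Ioi 0 for n ≥ k
  have hint : ∀ n : ℕ, k ≤ n → IntegrableOn (fun y => (1 - F y) ^ n) (Set.Ioi (0:ℝ)) := by
    intro n hn
    refine ⟨hGm n, ?_⟩
    have hnonneg : 0 ≤ᵐ[volume.restrict (Set.Ioi (0:ℝ))] fun y => (1 - F y) ^ n := by
      filter_upwards [ae_restrict_mem measurableSet_Ioi] with y hy
      exact pow_nonneg (by linarith [(hrange y hy.le).2]) n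
    rw [hasFiniteIntegral_iff_ofReal hnonneg]
    refine lt_of_le_of_lt (lintegral_mono_ae ?_) hLp
    filter_upwards [ae_restrict_mem measurableSet_Ioi] with y hy
    exact ENNReal.ofReal_le_ofReal
      (hpow_le _ (by linarith [(hrange y hy.le).2]) (by linarith [(hrange y hy.le).1]) n hn)
  -- epsilon proof
  rw [Metric.tendsto_nhds]
  intro e he
  set e' : ℝ := min e 1 with he'def
  have he' : 0 < e' := lt_min he one_pos
  have he'1 : e' ≤ 1 := min_le_right _ _
  have he'e : e' ≤ e := min_le_left _ _
  set f0 : ℝ := f 0 with hf0def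
  set η : ℝ := f0 * e' / 8 with hηdef
  have hη : 0 < η := by positivity
  have hηf0 : η ≤ f0 / 8 := by
    rw [hηdef]; nlinarith
  -- continuity at 0 gives δ₀
  have hcw : ContinuousWithinAt f (Set.Icc 0 ε) 0 := hcont 0 ⟨le_rfl, hε.le⟩
  rw [Metric.continuousWithinAt_iff] at hcw
  obtain ⟨δ₀, hδ₀, hδ₀p⟩ := hcw η hη
  set δ : ℝ := min (min (δ₀/2) ε) (f0+η)⁻¹ with hδdef
  have hδ0 : 0 < δ := by
    apply lt_min (lt_min (by linarith) hε); positivity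
  have hδε : δ ≤ ε := le_trans (min_le_left _ _) (min_le_right _ _)
  have hδδ₀ : δ < δ₀ := lt_of_le_of_lt (le_trans (min_le_left _ _) (min_le_left _ _)) (by linarith)
  set c : ℝ := f0 + η with hcdef
  set c' : ℝ := f0 - η with hc'def
  have hc : 0 < c := by positivity
  have hc' : 0 < c' := by rw [hc'def]; linarith
  have hcδ : c * δ ≤ 1 := by
    have : δ ≤ c⁻¹ := min_le_right _ _
    calc c * δ ≤ c * c⁻¹ := by nlinarith
    _ = 1 := mul_inv_cancel₀ hc.ne'
  have hc'δ : c' * δ ≤ 1 := le_trans (by nlinarith) hcδ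
  -- bounds on f near 0
  have hfb : ∀ y ∈ Set.Icc (0:ℝ) δ, f0 - η ≤ f y ∧ f y ≤ f0 + η := by
    intro y hy
    have hyε : y ∈ Set.Icc 0 ε := ⟨hy.1, le_trans hy.2 hδε⟩
    have : dist y 0 < δ₀ := by
      rw [Real.dist_eq, sub_zero, abs_of_nonneg hy.1]; linarith [hy.2]
    have := hδ₀p hyε this
    rw [Real.dist_eq] at this
    constructor <;> [linarith [abs_lt.mp this |>.1]; linarith [abs_lt.mp this |>.2]]
  -- bounds on F near 0
  have hFb : ∀ y ∈ Set.Icc (0:ℝ) δ, c' * y ≤ F y ∧ F y ≤ c * y := by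
    intro y hy
    have hyε : y ∈ Set.Icc 0 ε := ⟨hy.1, le_trans hy.2 hδε⟩
    have hFy : F y = ∫ t in (0:ℝ)..y, f t := hdens y hyε
    have hfi : IntervalIntegrable f volume 0 y := by
      apply ContinuousOn.intervalIntegrable
      rw [Set.uIcc_of_le hy.1]
      exact hcont.mono (Set.Icc_subset_Icc le_rfl hyε.2)
    constructor
    · have : (∫ t in (0:ℝ)..y, (fun _ => c') t) ≤ ∫ t in (0:ℝ)..y, f t := by
        apply intervalIntegral.integral_mono_on hy.1 (intervalIntegrable_const) hfi
        intro t ht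
        exact (hfb t ⟨ht.1, le_trans ht.2 hy.2⟩).1
      rw [intervalIntegral.integral_const, smul_eq_mul, sub_zero] at this
      rw [hFy]; linarith [this]
    · have : (∫ t in (0:ℝ)..y, f t) ≤ ∫ t in (0:ℝ)..y, (fun _ => c) t := by
        apply intervalIntegral.integral_mono_on hy.1 hfi (intervalIntegrable_const)
        intro t ht
        exact (hfb t ⟨ht.1, le_trans ht.2 hy.2⟩).2
      rw [intervalIntegral.integral_const, smul_eq_mul, sub_zero] at this
      rw [hFy]; linarith [this]
  -- q and B
  set q : ℝ := 1 - F δ with hqdef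
  have hq0 : 0 ≤ q := by
    have := (hrange δ hδ0.le).2; linarith
  have hq1 : q < 1 := by
    have := (hFb δ ⟨hδ0.le, le_rfl⟩).1
    have : 0 < F δ := lt_of_lt_of_le (by positivity) this
    linarith
  set B : ℝ := ∫ y in Set.Ioi (0:ℝ), (1 - F y) ^ k with hBdef
  have hB0 : 0 ≤ B := by
    apply setIntegral_nonneg measurableSet_Ioi
    intro y hy
    exact pow_nonneg (by linarith [(hrange y (le_of_lt hy)).2]) k
  -- eventually statements
  have hr₁0 : (0:ℝ) ≤ 1 - c * δ := by linarith
  have hr₁1 : 1 - c * δ < 1 := by nlinarith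
  have E1 : ∀ᶠ n : ℕ in atTop, (1 - c*δ) ^ (n+1) ≤ e'/4 := by
    have := tendsto_pow_atTop_nhds_zero_of_lt_one hr₁0 hr₁1
    have h4 : (0:ℝ) < e'/4 := by positivity
    filter_upwards [this.eventually (eventually_lt_nhds h4 |>.mono fun x h => h)] with n hn
    calc (1 - c*δ)^(n+1) ≤ (1 - c*δ)^n := pow_le_pow_of_le_one hr₁0 (by linarith) (Nat.le_succ n)
    _ ≤ e'/4 := le_of_lt hn
  have E2 : ∀ᶠ n : ℕ in atTop, k ≤ n → f0 * (n+1) * q^(n-k) * B ≤ e'/4 := by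
    have t1 : Tendsto (fun m : ℕ => f0 * B * ((m:ℝ) * q ^ m) + (f0 * B * ((k:ℝ)+1)) * q ^ m)
        atTop (nhds 0) := by
      have a1 := (tendsto_self_mul_const_pow_of_lt_one hq0 hq1).const_mul (f0 * B)
      have a2 := (tendsto_pow_atTop_nhds_zero_of_lt_one hq0 hq1).const_mul (f0 * B * ((k:ℝ)+1))
      simpa using a1.add a2
    have h4 : (0:ℝ) < e'/4 := by positivity
    have hev : ∀ᶠ m : ℕ in atTop,
        f0 * B * ((m:ℝ) * q ^ m) + (f0 * B * ((k:ℝ)+1)) * q ^ m < e'/4 :=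
      t1.eventually (eventually_lt_nhds h4)
    have hsub : Tendsto (fun n : ℕ => n - k) atTop atTop := tendsto_sub_atTop_nat k
    filter_upwards [hsub.eventually hev] with n hn hkn
    have hcast : ((n - k : ℕ) : ℝ) = (n : ℝ) - k := by
      rw [Nat.cast_sub hkn]
    have : f0 * (n+1) * q^(n-k) * B
        = f0 * B * (((n-k:ℕ):ℝ) * q ^ (n-k)) + (f0 * B * ((k:ℝ)+1)) * q ^ (n-k) := by
      rw [hcast]; ring
    rw [this]; exact le_of_lt hn
  -- main bounds for n ≥ k
  filter_upwards [E1, E2, eventually_ge_atTop k] with n h1 h2 hkn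
  have hn1 : (0:ℝ) < (n:ℝ) + 1 := by positivity
  -- splitting
  have hIoc : IntegrableOn (fun y => (1 - F y) ^ n) (Set.Ioc (0:ℝ) δ) :=
    (hint n hkn).mono_set Set.Ioc_subset_Ioi_self
  have hIoiδ : IntegrableOn (fun y => (1 - F y) ^ n) (Set.Ioi δ) :=
    (hint n hkn).mono_set (Set.Ioi_subset_Ioi hδ0.le)
  have hsplit : (∫ y in Set.Ioi (0:ℝ), (1 - F y) ^ n)
      = (∫ y in Set.Ioc (0:ℝ) δ, (1 - F y) ^ n) + ∫ y in Set.Ioi δ, (1 - F y) ^ n := by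
    rw [← setIntegral_union (Set.Ioc_disjoint_Ioi le_rfl) measurableSet_Ioi hIoc hIoiδ,
      Set.Ioc_union_Ioi_eq_Ioi hδ0.le]
  -- lower bound
  have hlow : (1 - (1 - c*δ)^(n+1)) / (c*((n:ℝ)+1)) ≤ ∫ y in Set.Ioi (0:ℝ), (1 - F y) ^ n := by
    rw [hsplit]
    have htail : 0 ≤ ∫ y in Set.Ioi δ, (1 - F y) ^ n := by
      apply setIntegral_nonneg measurableSet_Ioi
      intro y hy
      exact pow_nonneg (by linarith [(hrange y (le_of_lt (lt_trans hδ0 hy))).2]) n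
    have hpoly : IntegrableOn (fun y => (1 - c*y)^n) (Set.Ioc (0:ℝ) δ) := by
      apply Continuous.integrableOn_Ioc
      exact ((continuous_const.sub (continuous_const.mul continuous_id)).pow n)
    have hmain : (∫ y in Set.Ioc (0:ℝ) δ, (1 - c*y)^n)
        ≤ ∫ y in Set.Ioc (0:ℝ) δ, (1 - F y) ^ n := by
      apply setIntegral_mono_on hpoly hIoc measurableSet_Ioc
      intro y hy
      apply pow_le_pow_left₀
      · nlinarith [hy.1, hy.2]
      · linarith [(hFb y ⟨hy.1.le, hy.2⟩).2]
    have hform : (∫ y in Set.Ioc (0:ℝ) δ, (1 - c*y)^n)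
        = (1 - (1 - c*δ)^(n+1)) / (c*((n:ℝ)+1)) := by
      rw [← intervalIntegral.integral_of_le hδ0.le, aux_integral_pow_linear c δ hc.ne' n]
    linarith
  -- upper bound
  have hupp : (∫ y in Set.Ioi (0:ℝ), (1 - F y) ^ n)
      ≤ 1 / (c'*((n:ℝ)+1)) + q^(n-k) * B := by
    rw [hsplit]
    have hmain : (∫ y in Set.Ioc (0:ℝ) δ, (1 - F y)^n)
        ≤ ∫ y in Set.Ioc (0:ℝ) δ, (1 - c'*y) ^ n := by
      have hpoly : IntegrableOn (fun y => (1 - c'*y)^n) (Set.Ioc (0:ℝ) δ) := by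
        apply Continuous.integrableOn_Ioc
        exact ((continuous_const.sub (continuous_const.mul continuous_id)).pow n)
      apply setIntegral_mono_on hIoc hpoly measurableSet_Ioc
      intro y hy
      apply pow_le_pow_left₀
      · linarith [(hrange y hy.1.le).2]
      · linarith [(hFb y ⟨hy.1.le, hy.2⟩).1]
    have hform : (∫ y in Set.Ioc (0:ℝ) δ, (1 - c'*y)^n)
        = (1 - (1 - c'*δ)^(n+1)) / (c'*((n:ℝ)+1)) := by
      rw [← intervalIntegral.integral_of_le hδ0.le, aux_integral_pow_linear c' δ hc'.ne' n]
    have hform_le : (1 - (1 - c'*δ)^(n+1)) / (c'*((n:ℝ)+1)) ≤ 1 / (c'*((n:ℝ)+1)) := by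
      have h5 : (0:ℝ) ≤ (1 - c'*δ)^(n+1) := pow_nonneg (by linarith) _
      rw [div_le_div_iff_of_pos_right (by positivity)]
      linarith
    have htail : (∫ y in Set.Ioi δ, (1 - F y)^n) ≤ q^(n-k) * B := by
      have hqk : IntegrableOn (fun y => q^(n-k) * (1 - F y)^k) (Set.Ioi δ) :=
        ((hint k le_rfl).mono_set (Set.Ioi_subset_Ioi hδ0.le)).const_mul _
      have step1 : (∫ y in Set.Ioi δ, (1 - F y)^n)
          ≤ ∫ y in Set.Ioi δ, q^(n-k) * (1 - F y)^k := by
        apply setIntegral_mono_on hIoiδ hqk measurableSet_Ioi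
        intro y hy
        have hy0 : (0:ℝ) ≤ y := le_trans hδ0.le (le_of_lt hy)
        have h1F : 0 ≤ 1 - F y := by linarith [(hrange y hy0).2]
        have hFq : 1 - F y ≤ q := by
          have := hmono δ y hδ0.le (le_of_lt hy); linarith
        calc (1 - F y)^n = (1 - F y)^(n-k) * (1 - F y)^k := by
              rw [← pow_add]; congr 1; omega
        _ ≤ q^(n-k) * (1 - F y)^k := by
              apply mul_le_mul_of_nonneg_right (pow_le_pow_left₀ h1F hFq _) (pow_nonneg h1F k)
      have step2 : (∫ y in Set.Ioi δ, q^(n-k) * (1 - F y)^k)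
          = q^(n-k) * ∫ y in Set.Ioi δ, (1 - F y)^k := integral_const_mul _ _
      have step3 : (∫ y in Set.Ioi δ, (1 - F y)^k) ≤ B := by
        apply setIntegral_mono_set (hint k le_rfl) ?_ ?_
        · filter_upwards [ae_restrict_mem measurableSet_Ioi] with y hy
          exact pow_nonneg (by linarith [(hrange y (le_of_lt hy)).2]) k
        · exact HasSubset.Subset.eventuallyLE (Set.Ioi_subset_Ioi hδ0.le)
      calc (∫ y in Set.Ioi δ, (1 - F y)^n) ≤ q^(n-k) * ∫ y in Set.Ioi δ, (1 - F y)^k := by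
            rw [← step2]; exact step1
      _ ≤ q^(n-k) * B := mul_le_mul_of_nonneg_left step3 (pow_nonneg hq0 _)
    linarith
  -- conclude
  set I : ℝ := ∫ y in Set.Ioi (0:ℝ), (1 - F y) ^ n with hIdef
  rw [Real.dist_eq]
  rw [abs_lt]
  have hf0c : f0 / c ≤ 1 := by
    rw [div_le_one hc]; linarith
  have hf0c_ge : 1 - e'/8 ≤ f0 / c := by
    rw [le_div_iff₀ hc]
    rw [hcdef, hηdef]
    nlinarith
  have hf0c' : f0 / c' ≤ 1 + e'/4 := by
    rw [div_le_iff₀ hc']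
    rw [hc'def, hηdef]
    nlinarith
  have hlow2 : f0 / c - e'/4 ≤ f0 * ((n:ℝ)+1) * I := by
    have h3 : f0 * ((n:ℝ)+1) * ((1 - (1 - c*δ)^(n+1)) / (c*((n:ℝ)+1)))
        = (f0 / c) * (1 - (1 - c*δ)^(n+1)) := by
      field_simp
    have h4 : f0 * ((n:ℝ)+1) * ((1 - (1 - c*δ)^(n+1)) / (c*((n:ℝ)+1)))
        ≤ f0 * ((n:ℝ)+1) * I := by
      apply mul_le_mul_of_nonneg_left hlow (by positivity)
    rw [h3] at h4
    have h5 : 0 ≤ (1 - c*δ)^(n+1) := pow_nonneg hr₁0 _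
    nlinarith [h1]
  have hupp2 : f0 * ((n:ℝ)+1) * I ≤ f0 / c' + e'/4 := by
    have h4 : f0 * ((n:ℝ)+1) * I
        ≤ f0 * ((n:ℝ)+1) * (1 / (c'*((n:ℝ)+1)) + q^(n-k) * B) := by
      apply mul_le_mul_of_nonneg_left hupp (by positivity)
    have h5 : f0 * ((n:ℝ)+1) * (1 / (c'*((n:ℝ)+1)) + q^(n-k) * B)
        = f0 / c' + f0 * ((n:ℝ)+1) * q^(n-k) * B := by
      field_simp
    rw [h5] at h4
    have h6 := h2 hkn
    push_cast at h6 ⊢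
    linarith
  constructor
  · push_cast
    nlinarith
  · push_cast
    nlinarith
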